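/- arXiv:0707.3894 — 4 statements merged into one kernel-verified Lean document; each statement's English description precedes it below -/
import Mathlib

section
/- Let R be a Kähler algebraic curvature tensor on (V, J) and let u, v be unit vectors with ⟨u,v⟩ = ⟨u,Jv⟩ = 0. If both R^iso(u,Ju,v,Jv) = 0 and R^iso(u,Ju,Jv,v) = 0, then R(u,Ju,v,Jv) = 0 and R(u,v,u,v) + R(u,Jv,u,Jv) = 0. -/
open scoped RealInnerProductSpace

/-- The isotropic-curvature expression of an algebraic curvature tensor on a 4-frame. -/
def isoCurv {E : Type*} [NormedAddCommGroup E] [InnerProductSpace ℝ E]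
    (R : E →ₗ[ℝ] E →ₗ[ℝ] E →ₗ[ℝ] E →ₗ[ℝ] ℝ) (e₁ e₂ e₃ e₄ : E) : ℝ :=
  R e₁ e₃ e₁ e₃ + R e₁ e₄ e₁ e₄ + R e₂ e₃ e₂ e₃ + R e₂ e₄ e₂ e₄ - 2 * R e₁ e₂ e₃ e₄

/-- For a Kähler algebraic curvature tensor `R` on `(V, J)` and unit
vectors `u, v` with `⟪u,v⟫ = ⟪u,Jv⟫ = 0`, if both `Riso(u,Ju,v,Jv) = 0` and
`Riso(u,Ju,Jv,v) = 0` then `R(u,Ju,v,Jv) = 0` and `R(u,v,u,v) + R(u,Jv,u,Jv) = 0`. -/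
theorem kaehler_isoCurv_vanishing
    {E : Type*} [NormedAddCommGroup E] [InnerProductSpace ℝ E]
    (R : E →ₗ[ℝ] E →ₗ[ℝ] E →ₗ[ℝ] E →ₗ[ℝ] ℝ)
    (hA : ∀ x y z w, R x y z w = - R y x z w)
    (hP : ∀ x y z w, R x y z w = R z w x y)
    (hB1 : ∀ x y z w, R x y z w + R y z x w + R z x y w = 0)
    (J : E →ₗ[ℝ] E)
    (hJ2 : ∀ x, J (J x) = -x)
    (hJO : ∀ x y, ⟪J x, J y⟫ = ⟪x, y⟫)
    (hK : ∀ x y z w, R (J x) (J y) z w = R x y z w)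
    (u v : E) (hu : ‖u‖ = 1) (hv : ‖v‖ = 1)
    (huv : ⟪u, v⟫ = 0) (huJv : ⟪u, J v⟫ = 0)
    (h1 : isoCurv R u (J u) v (J v) = 0)
    (h2 : isoCurv R u (J u) (J v) v = 0) :
    R u (J u) v (J v) = 0 ∧ R u v u v + R u (J v) u (J v) = 0 := by
  -- antisymmetry in the last two arguments
  have hA' : ∀ x y z w, R x y z w = - R x y w z := by
    intro x y z w
    rw [hP, hA, ← hP]
  -- R (J u) v z w = - R u (J v) z w
  have key : ∀ z w, R (J u) v z w = - R u (J v) z w := by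
    intro z w
    have h := hK u (J v) z w
    rw [hJ2] at h
    simp only [map_neg, LinearMap.neg_apply] at h
    linarith
  have e1 : R (J u) v (J u) v = R u (J v) u (J v) := by
    rw [key (J u) v, hP u (J v) (J u) v, key u (J v)]
    ring
  have e2 : R (J u) (J v) (J u) (J v) = R u v u v := by
    rw [hK u v (J u) (J v), hP u v (J u) (J v), hK u v u v]
  have e3 : R u (J u) (J v) v = - R u (J u) v (J v) := hA' u (J u) (J v) v
  unfold isoCurv at h1 h2
  rw [e1, e2] at h1 h2
  constructor <;> linarith
end

section
/- Let R be a Kähler algebraic curvature tensor on (V,J) with nonnegative isotropic curvature, and let u, v be orthonormal vectors with ⟨u,Jv⟩ = 0. If R^iso(u,Ju,Jv,v) = 0, i.e. the frame (u,Ju,Jv,v) has vanishing isotropic curvature, while additionally R(u,Ju,v,Jv) = R(u,Jv,u,Jv) + R(u,v,u,v), then R(u,Ju,v,Jv) = 0 and R(u,Jv,u,Jv) + R(u,v,u,v) = 0. -/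
open scoped RealInnerProductSpace

/-- Let `R` be a Kähler algebraic curvature tensor on `(V,J)` with
nonnegative isotropic curvature, and let `u, v` be orthonormal with `⟪u,Jv⟫ = 0`.
If `Riso(u,Ju,Jv,v) = 0` and moreover `R(u,Ju,v,Jv) = R(u,Jv,u,Jv) + R(u,v,u,v)`, then
`R(u,Ju,v,Jv) = 0` and `R(u,Jv,u,Jv) + R(u,v,u,v) = 0`. -/
theorem kaehler_nonneg_isoCurv_vanishing
    {E : Type*} [NormedAddCommGroup E] [InnerProductSpace ℝ E]
    (R : E →ₗ[ℝ] E →ₗ[ℝ] E →ₗ[ℝ] E →ₗ[ℝ] ℝ)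
    (hA : ∀ x y z w, R x y z w = - R y x z w)
    (hP : ∀ x y z w, R x y z w = R z w x y)
    (hB1 : ∀ x y z w, R x y z w + R y z x w + R z x y w = 0)
    (J : E →ₗ[ℝ] E)
    (hJ2 : ∀ x, J (J x) = -x)
    (hJO : ∀ x y, ⟪J x, J y⟫ = ⟪x, y⟫)
    (hK : ∀ x y z w, R (J x) (J y) z w = R x y z w)
    (hNonneg : ∀ e₁ e₂ e₃ e₄ : E, Orthonormal ℝ ![e₁, e₂, e₃, e₄] →
      0 ≤ isoCurv R e₁ e₂ e₃ e₄)
    (u v : E) (hu : ‖u‖ = 1) (hv : ‖v‖ = 1)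
    (huv : ⟪u, v⟫ = 0) (huJv : ⟪u, J v⟫ = 0)
    (hzero : isoCurv R u (J u) (J v) v = 0)
    (hrel : R u (J u) v (J v) = R u (J v) u (J v) + R u v u v) :
    R u (J u) v (J v) = 0 ∧ R u (J v) u (J v) + R u v u v = 0 := by
  have hA' : ∀ x y z w, R x y z w = - R x y w z := by
    intro x y z w
    rw [hP x y z w, hA z w x y, ← hP w z x y]
  have h1 : R (J u) (J v) (J u) (J v) = R u v u v := by
    rw [hK u v (J u) (J v), hP, hK]
  have e : ∀ z w, R (J u) v z w = - R u (J v) z w := by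
    intro z w
    have h := hK u (J v) z w
    rw [hJ2] at h
    simp only [map_neg, LinearMap.neg_apply] at h
    linarith
  have h2 : R (J u) v (J u) v = R u (J v) u (J v) := by
    rw [e, hP, e]; ring
  have hz : R u (J v) u (J v) + R u v u v + R u (J u) v (J v) = 0 := by
    have h := hzero
    unfold isoCurv at h
    rw [h1, h2, hA' u (J u) (J v) v] at h
    linarith
  constructor <;> linarith
end

section
/- Let R be a Kähler algebraic curvature tensor on (V,J), and suppose u, v are orthonormal vectors with ⟨u,Jv⟩ = 0 and R(u,Ju,v,Jv) = R(u,Jv,u,Jv) + R(u,v,u,v) = 0. Suppose further that the same vanishing holds after the unitary rotation u ↦ (u − Jv)/√2, v ↦ (u + Jv)/√2. Then R(u,Ju,u,Ju) + R(v,Jv,v,Jv) − 4R(u,v,u,v) = 0. -/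
open scoped RealInnerProductSpace

set_option maxHeartbeats 2000000 in
/-- Let `R` be a Kähler algebraic curvature tensor on `(V,J)` and `u, v`
orthonormal with `⟪u,Jv⟫ = 0`, with `R(u,Ju,v,Jv) = 0` and
`R(u,Jv,u,Jv) + R(u,v,u,v) = 0`.  If the same vanishing holds for the rotated pair
`u' = (u − Jv)/√2`, `v' = (u + Jv)/√2`, then
`R(u,Ju,u,Ju) + R(v,Jv,v,Jv) − 4 R(u,v,u,v) = 0`. -/
theorem kaehler_rotation_identity
    {E : Type*} [NormedAddCommGroup E] [InnerProductSpace ℝ E]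
    (R : E →ₗ[ℝ] E →ₗ[ℝ] E →ₗ[ℝ] E →ₗ[ℝ] ℝ)
    (hA : ∀ x y z w, R x y z w = - R y x z w)
    (hP : ∀ x y z w, R x y z w = R z w x y)
    (hB1 : ∀ x y z w, R x y z w + R y z x w + R z x y w = 0)
    (J : E →ₗ[ℝ] E)
    (hJ2 : ∀ x, J (J x) = -x)
    (hJO : ∀ x y, ⟪J x, J y⟫ = ⟪x, y⟫)
    (hK : ∀ x y z w, R (J x) (J y) z w = R x y z w)
    (u v : E) (hu : ‖u‖ = 1) (hv : ‖v‖ = 1)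
    (huv : ⟪u, v⟫ = 0) (huJv : ⟪u, J v⟫ = 0)
    (h1 : R u (J u) v (J v) = 0)
    (h2 : R u (J v) u (J v) + R u v u v = 0)
    (h1' : R ((Real.sqrt 2)⁻¹ • (u - J v)) (J ((Real.sqrt 2)⁻¹ • (u - J v)))
            ((Real.sqrt 2)⁻¹ • (u + J v)) (J ((Real.sqrt 2)⁻¹ • (u + J v))) = 0)
    (h2' : R ((Real.sqrt 2)⁻¹ • (u - J v)) (J ((Real.sqrt 2)⁻¹ • (u + J v)))
            ((Real.sqrt 2)⁻¹ • (u - J v)) (J ((Real.sqrt 2)⁻¹ • (u + J v)))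
          + R ((Real.sqrt 2)⁻¹ • (u - J v)) ((Real.sqrt 2)⁻¹ • (u + J v))
              ((Real.sqrt 2)⁻¹ • (u - J v)) ((Real.sqrt 2)⁻¹ • (u + J v)) = 0) :
    R u (J u) u (J u) + R v (J v) v (J v) - 4 * R u v u v = 0 := by
  have hs : ((Real.sqrt 2 : ℝ))⁻¹ ≠ 0 := by
    simp [Real.sqrt_eq_zero']
  have e1 : J ((Real.sqrt 2)⁻¹ • (u - J v)) = (Real.sqrt 2)⁻¹ • (J u + v) := by
    rw [map_smul, map_sub, hJ2, sub_neg_eq_add]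
  have e2 : J ((Real.sqrt 2)⁻¹ • (u + J v)) = (Real.sqrt 2)⁻¹ • (J u - v) := by
    rw [map_smul, map_add, hJ2, ← sub_eq_add_neg]
  rw [e1, e2] at h1'
  simp only [map_smul, LinearMap.smul_apply, smul_eq_mul, mul_eq_zero, inv_eq_zero] at h1'
  have H1 : R (u - J v) (J u + v) (u + J v) (J u - v) = 0 := by
    have h2ne : Real.sqrt 2 ≠ 0 := by positivity
    tauto
  have key : ∀ x y a b c : E, R (x - y) a b c = R x a b c - R y a b c := by
    intro x y a b c
    rw [sub_eq_add_neg x y, ← neg_one_smul ℝ y, map_add, map_smul, LinearMap.add_apply,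
      LinearMap.smul_apply, LinearMap.add_apply, LinearMap.smul_apply, LinearMap.add_apply,
      LinearMap.smul_apply, smul_eq_mul]
    ring
  simp only [key, map_add, map_sub, LinearMap.add_apply, LinearMap.sub_apply] at H1
  linear_combination H1 - 2*h1 + (1) * hP u (J u) u v +
    (2) * hB1 u (J u) v (J v) -
    (1) * hP u (J u) (J v) (J u) +
    (2) * hA u (J u) (J v) v -
    (1) * hP u (J u) (J v) v -
    (2) * hA u v (J u) (J v) +
    (3) * hP u v (J u) (J v) -
    (1) * hP u v (J v) (J u) +
    (1) * hP u v (J v) v +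
    (2) * hP u (J v) (J u) v -
    (2) * hB1 u (J v) (J u) v +
    (1/2) * hA (J u) (J u) (J v) (J v) -
    (1) * hB1 (J u) (J u) (J v) (J v) -
    (1) * hA (J u) v (J v) (J v) +
    (1) * hB1 (J u) v (J v) (J v) -
    (2) * hA (J u) (J v) v (J v) +
    (1) * hP (J u) (J v) v (J v) +
    (1) * hB1 (J u) (J v) v (J v) +
    (1) * hA (J u) (J v) (J v) (J u) -
    (1) * hP (J u) (J v) (J v) (J u) -
    (1) * hA (J u) (J v) (J v) v +
    (1) * hP (J u) (J v) (J v) v -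
    (1/2) * hA v v (J v) (J v) +
    (1) * hB1 v v (J v) (J v) +
    (1) * hA v (J v) (J v) (J u) -
    (1) * hP v (J v) (J v) (J u) -
    (1) * hA v (J v) (J v) v +
    (1) * hP v (J v) (J v) v +
    (3) * hK u v u v +
    (1) * hK u v (J u) (J v)
end

section
/- Let R be a Kähler algebraic curvature tensor on (V,J) and u, v orthonormal with ⟨u,Jv⟩=0, satisfying R(u,Ju,v,Jv) = R(u,Jv,u,Jv) + R(u,v,u,v) = 0, and suppose the same relations hold for the rotated pairs ((u−Jv)/√2, (u+Jv)/√2) and ((u−v)/√2, (u+v)/√2). Then R(u,v,u,v) = R(u,Jv,u,Jv) = 0 and R(u,Ju,u,Ju) + R(v,Jv,v,Jv) = 0. -/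
set_option maxHeartbeats 1600000

open scoped RealInnerProductSpace

/-- Let `R` be a Kähler algebraic curvature tensor on `(V,J)` and `u, v`
orthonormal with `⟪u,Jv⟫ = 0`, satisfying `R(u,Ju,v,Jv) = 0` and
`R(u,Jv,u,Jv) + R(u,v,u,v) = 0`, and suppose the same relations hold for the rotated
pairs `((u−Jv)/√2, (u+Jv)/√2)` and `((u−v)/√2, (u+v)/√2)`.  Then
`R(u,v,u,v) = R(u,Jv,u,Jv) = 0` and `R(u,Ju,u,Ju) + R(v,Jv,v,Jv) = 0`. -/
theorem kaehler_rotation_vanishing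
    {E : Type*} [NormedAddCommGroup E] [InnerProductSpace ℝ E]
    (R : E →ₗ[ℝ] E →ₗ[ℝ] E →ₗ[ℝ] E →ₗ[ℝ] ℝ)
    (hA : ∀ x y z w, R x y z w = - R y x z w)
    (hP : ∀ x y z w, R x y z w = R z w x y)
    (hB1 : ∀ x y z w, R x y z w + R y z x w + R z x y w = 0)
    (J : E →ₗ[ℝ] E)
    (hJ2 : ∀ x, J (J x) = -x)
    (hJO : ∀ x y, ⟪J x, J y⟫ = ⟪x, y⟫)
    (hK : ∀ x y z w, R (J x) (J y) z w = R x y z w)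
    (u v : E) (hu : ‖u‖ = 1) (hv : ‖v‖ = 1)
    (huv : ⟪u, v⟫ = 0) (huJv : ⟪u, J v⟫ = 0)
    (h1 : R u (J u) v (J v) = 0)
    (h2 : R u (J v) u (J v) + R u v u v = 0)
    (hrot : ∀ u' v' : E,
      (u' = (Real.sqrt 2)⁻¹ • (u - J v) ∧ v' = (Real.sqrt 2)⁻¹ • (u + J v)) ∨
      (u' = (Real.sqrt 2)⁻¹ • (u - v) ∧ v' = (Real.sqrt 2)⁻¹ • (u + v)) →
        R u' (J u') v' (J v') = 0 ∧ R u' (J v') u' (J v') + R u' v' u' v' = 0) :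
    R u v u v = 0 ∧ R u (J v) u (J v) = 0 ∧
      R u (J u) u (J u) + R v (J v) v (J v) = 0 := by
  have hA' : ∀ x y z w, R x y z w = - R x y w z := by
    intro x y z w
    rw [hP x y z w, hA z w x y, hP w z x y]
  have hK1 : ∀ x y z w, R (J x) y z w = - R x (J y) z w := by
    intro x y z w
    have h := hK x (J y) z w
    rw [hJ2] at h
    simp only [map_neg, LinearMap.neg_apply] at h
    linarith
  have hK2 : ∀ x y z w, R x y (J z) (J w) = R x y z w := by
    intro x y z w
    rw [hP, hK, hP]
  have hK3 : ∀ x y z w, R x y (J z) w = - R x y z (J w) := by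
    intro x y z w
    have h := hK1 z w x y
    rw [hP x y (J z) w, hP x y z (J w)]
    exact h
  have hc : ((Real.sqrt 2 : ℝ))⁻¹ ≠ 0 := inv_ne_zero (by positivity)
  have hr1 := (hrot _ _ (Or.inl ⟨rfl, rfl⟩)).1
  have hr2 := (hrot _ _ (Or.inr ⟨rfl, rfl⟩)).1
  simp only [map_smul, LinearMap.smul_apply, smul_eq_mul, mul_eq_zero, hc, false_or] at hr1 hr2
  have hRsub : ∀ a b y z w : E, R (a - b) y z w = R a y z w - R b y z w := by
    intro a b y z w
    rw [sub_eq_add_neg, map_add, ← neg_one_smul ℝ b, map_smul]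
    simp only [LinearMap.add_apply, LinearMap.smul_apply, smul_eq_mul]; ring
  simp only [map_sub, map_add, hJ2, sub_neg_eq_add, LinearMap.sub_apply, LinearMap.add_apply,
    map_neg, LinearMap.neg_apply, hRsub] at hr1 hr2
  refine ⟨?_, ?_, ?_⟩ <;>
    linarith [h1, h2, hr1, hr2, hA (J v) (J u) (J v) (J u), hA (J v) (J u) (J v) v, hA (J v) (J u) u (J u), hA (J v) (J u) u v, hA (J v) v (J v) (J u), hA (J v) v (J v) v, hA (J v) v u (J u), hA (J v) v u v, hA v (J u) u (J u), hA v (J u) u (J v), hA v (J u) v (J u), hA v (J u) v (J v), hA' (J u) (J v) (J v) (J u), hA' (J u) (J v) (J v) v, hA' (J u) v v (J u), hA' u (J u) (J v) (J u), hA' u (J u) (J v) v, hA' u (J u) v (J u), hA' u (J v) v (J u), hA' u v (J v) (J u), hA' u v (J v) v, hA' v (J v) (J v) (J u), hA' v (J v) (J v) v, hA' v (J v) v (J u), hK u v (J u) (J v), hK u v u (J u), hK u v u v, hK u v v (J v), hK1 u v (J u) v, hK1 u v u (J v), hK1 u v v (J v), hK2 u v u v, hK3 u (J u) u v, hK3 u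 (J v) u v, hP (J u) v u (J u), hP u (J u) (J u) (J v), hP u (J u) u v, hP u (J v) u (J u), hP v (J v) (J u) (J v), hP v (J v) (J u) v, hP v (J v) u (J u), hP v (J v) u (J v), hP v (J v) u v]
end
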